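/- With A¹, A², A³ the 6×6 matrices from the Maxwell system and c ∈ ℝ³ with |c| < 1, the matrix B = I + c_1 A¹ + c_2 A² + c_3 A³ is symmetric positive definite, with smallest eigenvalue 1 - |c|. -/

import Mathlib

open Matrix

/-- The symbol matrices of the Maxwell-type system for the curvature two-form. -/
noncomputable def calA1 : Matrix (Fin 6) (Fin 6) ℝ :=
  !![0,0,0,0,0,0; 0,0,0,0,0,-1; 0,0,0,0,1,0; 0,0,0,0,0,0; 0,0,1,0,0,0; 0,-1,0,0,0,0]

noncomputable def calA2 : Matrix (Fin 6) (Fin 6) ℝ :=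
  !![0,0,0,0,0,1; 0,0,0,0,0,0; 0,0,0,-1,0,0; 0,0,-1,0,0,0; 0,0,0,0,0,0; 1,0,0,0,0,0]

noncomputable def calA3 : Matrix (Fin 6) (Fin 6) ℝ :=
  !![0,0,0,0,-1,0; 0,0,0,1,0,0; 0,0,0,0,0,0; 0,1,0,0,0,0; -1,0,0,0,0,0; 0,0,0,0,0,0]

section cv
variable {α : Type*}
@[simp] lemma cv5_5 (a : α) (u : Fin 5 → α) : vecCons a u 5 = u 4 := rfl
@[simp] lemma cv5_4 (a : α) (u : Fin 5 → α) : vecCons a u 4 = u 3 := rfl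
@[simp] lemma cv5_3 (a : α) (u : Fin 5 → α) : vecCons a u 3 = u 2 := rfl
@[simp] lemma cv5_2 (a : α) (u : Fin 5 → α) : vecCons a u 2 = u 1 := rfl
@[simp] lemma cv5_1 (a : α) (u : Fin 5 → α) : vecCons a u 1 = u 0 := rfl
@[simp] lemma cv4_4 (a : α) (u : Fin 4 → α) : vecCons a u 4 = u 3 := rfl
@[simp] lemma cv4_3 (a : α) (u : Fin 4 → α) : vecCons a u 3 = u 2 := rfl
@[simp] lemma cv4_2 (a : α) (u : Fin 4 → α) : vecCons a u 2 = u 1 := rfl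
@[simp] lemma cv4_1 (a : α) (u : Fin 4 → α) : vecCons a u 1 = u 0 := rfl
@[simp] lemma cv3_3 (a : α) (u : Fin 3 → α) : vecCons a u 3 = u 2 := rfl
@[simp] lemma cv3_2 (a : α) (u : Fin 3 → α) : vecCons a u 2 = u 1 := rfl
@[simp] lemma cv3_1 (a : α) (u : Fin 3 → α) : vecCons a u 1 = u 0 := rfl
@[simp] lemma cv2_2 (a : α) (u : Fin 2 → α) : vecCons a u 2 = u 1 := rfl
@[simp] lemma cv2_1 (a : α) (u : Fin 2 → α) : vecCons a u 1 = u 0 := rfl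
@[simp] lemma cv1_1 (a : α) (u : Fin 1 → α) : vecCons a u 1 = u 0 := rfl
end cv

lemma Bmat_eq (c : Fin 3 → ℝ) :
    (1 : Matrix (Fin 6) (Fin 6) ℝ) + c 0 • calA1 + c 1 • calA2 + c 2 • calA3 =
    !![1,0,0,0,-c 2,c 1; 0,1,0,c 2,0,-c 0; 0,0,1,-c 1,c 0,0;
       0,c 2,-c 1,1,0,0; -c 2,0,c 0,0,1,0; c 1,-c 0,0,0,0,1] := by
  unfold calA1 calA2 calA3
  norm_num [Matrix.smul_of, Matrix.smul_cons, Matrix.smul_empty, ← Matrix.of_add_of,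
    Matrix.add_cons, Matrix.head_cons, Matrix.tail_cons, Matrix.empty_add_empty]
  ext i j
  fin_cases i <;> fin_cases j <;>
    norm_num [Matrix.one_apply, Matrix.vecHead, Matrix.vecTail] <;> decide

lemma quad_form (c : Fin 3 → ℝ) (x : Fin 6 → ℝ) :
    x ⬝ᵥ ((1 : Matrix (Fin 6) (Fin 6) ℝ) + c 0 • calA1 + c 1 • calA2 + c 2 • calA3) *ᵥ x =
    (x 0^2 + x 1^2 + x 2^2 + x 3^2 + x 4^2 + x 5^2)
      + 2*(c 0*(x 2*x 4 - x 1*x 5) + c 1*(x 0*x 5 - x 2*x 3) + c 2*(x 1*x 3 - x 0*x 4)) := by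
  rw [Bmat_eq]
  simp [Matrix.mulVec, dotProduct, Fin.sum_univ_six, Matrix.vecHead, Matrix.vecTail]
  ring

/-- baby fact: `4D² ≤ P²` and `P ≥ 0` imply `2D ≤ P`. -/
lemma two_d_le (D P : ℝ) (h : 4*D^2 ≤ P^2) (hP : 0 ≤ P) : 2*D ≤ P := by nlinarith

/-- Abstract Cauchy–Schwarz + AM-GM step. -/
lemma cs_le (s c1 c2 c3 w1 w2 w3 E B : ℝ) (hs : 0 ≤ s) (hE : 0 ≤ E) (hB : 0 ≤ B)
    (hc : c1^2 + c2^2 + c3^2 ≤ s^2) (hw : w1^2 + w2^2 + w3^2 ≤ E*B) :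
    2*(c1*w1 + c2*w2 + c3*w3) ≤ s*(E+B) := by
  have hW : (0:ℝ) ≤ w1^2+w2^2+w3^2 := by positivity
  have hCS : (c1*w1 + c2*w2 + c3*w3)^2 ≤ (c1^2+c2^2+c3^2) * (w1^2+w2^2+w3^2) := by
    nlinarith [sq_nonneg (c1*w2 - c2*w1), sq_nonneg (c1*w3 - c3*w1), sq_nonneg (c2*w3 - c3*w2)]
  have h1 : (c1*w1 + c2*w2 + c3*w3)^2 ≤ s^2 * (E*B) := by
    nlinarith [sq_nonneg s]
  have h2 : 4*(E*B) ≤ (E+B)^2 := by nlinarith [sq_nonneg (E-B)]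
  have hsq : 4*(c1*w1 + c2*w2 + c3*w3)^2 ≤ (s*(E+B))^2 := by nlinarith [sq_nonneg s]
  have hP : 0 ≤ s*(E+B) := by positivity
  have := two_d_le (c1*w1 + c2*w2 + c3*w3) (s*(E+B)) hsq hP
  linarith

/-- Cross-product Cauchy–Schwarz style bound. -/
lemma cross_bound (s c1 c2 c3 e1 e2 e3 b1 b2 b3 : ℝ) (hs : 0 ≤ s)
    (hs2 : c1^2 + c2^2 + c3^2 ≤ s^2) :
    2*(c1*(e2*b3 - e3*b2) + c2*(e3*b1 - e1*b3) + c3*(e1*b2 - e2*b1)) ≤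
      s*(e1^2 + e2^2 + e3^2 + b1^2 + b2^2 + b3^2) := by
  have hLag : (e2*b3 - e3*b2)^2 + (e3*b1 - e1*b3)^2 + (e1*b2 - e2*b1)^2 ≤
      (e1^2+e2^2+e3^2) * (b1^2+b2^2+b3^2) := by
    nlinarith [sq_nonneg (e1*b1 + e2*b2 + e3*b3)]
  have := cs_le s c1 c2 c3 (e2*b3 - e3*b2) (e3*b1 - e1*b3) (e1*b2 - e2*b1)
    (e1^2+e2^2+e3^2) (b1^2+b2^2+b3^2) hs (by positivity) (by positivity) hs2 hLag
  linarith

lemma quad_lower (c : Fin 3 → ℝ) (s : ℝ) (hs : 0 ≤ s)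
    (hs2 : c 0^2 + c 1^2 + c 2^2 ≤ s^2) (x : Fin 6 → ℝ) :
    (1 - s) * (x 0^2 + x 1^2 + x 2^2 + x 3^2 + x 4^2 + x 5^2) ≤
      x ⬝ᵥ ((1 : Matrix (Fin 6) (Fin 6) ℝ) + c 0 • calA1 + c 1 • calA2 + c 2 • calA3) *ᵥ x := by
  rw [quad_form]
  have h := cross_bound s (c 0) (c 1) (c 2) (x 0) (x 1) (x 2) (x 3) (x 4) (x 5) hs hs2
  nlinarith [h]

lemma eig_eq (c : Fin 3 → ℝ) (s e1 e2 e3 : ℝ) (hs2 : s^2 = c 0^2 + c 1^2 + c 2^2)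
    (he : c 0*e1 + c 1*e2 + c 2*e3 = 0) :
    ((1 : Matrix (Fin 6) (Fin 6) ℝ) + c 0 • calA1 + c 1 • calA2 + c 2 • calA3) *ᵥ
      ![s*e1, s*e2, s*e3, c 1*e3 - c 2*e2, c 2*e1 - c 0*e3, c 0*e2 - c 1*e1] =
    (1 - s) • ![s*e1, s*e2, s*e3, c 1*e3 - c 2*e2, c 2*e1 - c 0*e3, c 0*e2 - c 1*e1] := by
  rw [Bmat_eq]
  funext i
  fin_cases i <;>
    simp [Matrix.mulVec, dotProduct, Fin.sum_univ_six, Matrix.vecHead, Matrix.vecTail] <;>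
    first
      | linear_combination e1 * hs2 + c 0 * he
      | linear_combination e2 * hs2 + c 1 * he
      | linear_combination e3 * hs2 + c 2 * he
      | ring


/-- If `|c| < 1` then `B = I + c₁A¹ + c₂A² + c₃A³` is symmetric positive definite
with smallest eigenvalue `1 - |c|`. -/
theorem stmt_4 (c : Fin 3 → ℝ) (hc : Real.sqrt (∑ i, c i ^ 2) < 1) :
    ((1 : Matrix (Fin 6) (Fin 6) ℝ) + c 0 • calA1 + c 1 • calA2 + c 2 • calA3).IsSymm ∧
    ((1 : Matrix (Fin 6) (Fin 6) ℝ) + c 0 • calA1 + c 1 • calA2 + c 2 • calA3).PosDef ∧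
    Module.End.HasEigenvalue
      ((1 : Matrix (Fin 6) (Fin 6) ℝ) + c 0 • calA1 + c 1 • calA2 + c 2 • calA3).mulVecLin
      (1 - Real.sqrt (∑ i, c i ^ 2)) ∧
    ∀ μ : ℝ,
      Module.End.HasEigenvalue
        ((1 : Matrix (Fin 6) (Fin 6) ℝ) + c 0 • calA1 + c 1 • calA2 + c 2 • calA3).mulVecLin μ →
      1 - Real.sqrt (∑ i, c i ^ 2) ≤ μ := by
  have hsum : ∑ i, c i ^ 2 = c 0 ^ 2 + c 1 ^ 2 + c 2 ^ 2 := by rw [Fin.sum_univ_three]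
  have hnn : (0:ℝ) ≤ ∑ i, c i ^ 2 := by positivity
  set s := Real.sqrt (∑ i, c i ^ 2) with hs_def
  have hs0 : 0 ≤ s := Real.sqrt_nonneg _
  have hs2 : s ^ 2 = c 0 ^ 2 + c 1 ^ 2 + c 2 ^ 2 := by
    rw [hs_def, Real.sq_sqrt hnn, hsum]
  have hsymm : ((1 : Matrix (Fin 6) (Fin 6) ℝ) + c 0 • calA1 + c 1 • calA2 + c 2 • calA3).IsSymm := by
    rw [Bmat_eq, Matrix.IsSymm]
    ext i j
    fin_cases i <;> fin_cases j <;>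
      simp [Matrix.transpose_apply, Matrix.vecHead, Matrix.vecTail]
  refine ⟨hsymm, Matrix.PosDef.of_dotProduct_mulVec_pos ?_ ?_, ?_, ?_⟩
  · rw [Matrix.IsHermitian, Matrix.conjTranspose_eq_transpose_of_trivial]
    exact hsymm
  · intro x hx
    have hxs : star x = x := by simp
    rw [hxs]
    obtain ⟨i, hi⟩ := Function.ne_iff.mp hx
    have hi' : x i ≠ 0 := by simpa using hi
    have hS : 0 < ∑ j : Fin 6, x j ^ 2 :=
      Finset.sum_pos' (fun j _ => sq_nonneg _) ⟨i, Finset.mem_univ i, by positivity⟩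
    rw [Fin.sum_univ_six] at hS
    have hq := quad_lower c s hs0 hs2.ge x
    have h1s : 0 < 1 - s := by linarith
    nlinarith [hq, h1s, hS]
  · by_cases h0 : c 0 = 0 ∧ c 1 = 0
    · by_cases h2 : c 2 = 0
      · -- c = 0, B = 1
        have hszero : s = 0 := by rw [hs_def, hsum, h0.1, h0.2, h2]; simp
        apply Module.End.hasEigenvalue_of_hasEigenvector (x := ![1,0,0,0,0,0])
        constructor
        · rw [Module.End.mem_eigenspace_iff, Matrix.mulVecLin_apply, Bmat_eq, hszero,
            h0.1, h0.2, h2]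
          funext i
          fin_cases i <;>
            simp [Matrix.mulVec, dotProduct, Fin.sum_univ_six,
              Matrix.vecHead, Matrix.vecTail]
        · intro h
          have := congrFun h 0
          simp at this
      · -- c 2 ≠ 0, use e = (1,0,0)
        have he : c 0 * 1 + c 1 * 0 + c 2 * 0 = 0 := by rw [h0.1]; ring
        apply Module.End.hasEigenvalue_of_hasEigenvector
          (x := ![s*1, s*0, s*0, c 1*0 - c 2*0, c 2*1 - c 0*0, c 0*0 - c 1*1])
        constructor
        · rw [Module.End.mem_eigenspace_iff, Matrix.mulVecLin_apply]
          exact eig_eq c s 1 0 0 hs2 he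
        · intro h
          have h4 := congrFun h 4
          simp [h0.1] at h4
          exact h2 h4
    · -- (c 0, c 1) ≠ 0, use e = (-c 1, c 0, 0)
      have he : c 0 * (-(c 1)) + c 1 * (c 0) + c 2 * 0 = 0 := by ring
      apply Module.End.hasEigenvalue_of_hasEigenvector
        (x := ![s*(-(c 1)), s*(c 0), s*0, c 1*0 - c 2*(c 0), c 2*(-(c 1)) - c 0*0,
                c 0*(c 0) - c 1*(-(c 1))])
      constructor
      · rw [Module.End.mem_eigenspace_iff, Matrix.mulVecLin_apply]
        exact eig_eq c s (-(c 1)) (c 0) 0 hs2 he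
      · intro h
        have h5 := congrFun h 5
        simp at h5
        apply h0
        constructor <;> nlinarith [sq_nonneg (c 0), sq_nonneg (c 1), h5]
  · intro μ hμ
    obtain ⟨v, hv⟩ := hμ.exists_hasEigenvector
    have hveq : ((1 : Matrix (Fin 6) (Fin 6) ℝ) + c 0 • calA1 + c 1 • calA2 + c 2 • calA3) *ᵥ v
        = μ • v := by
      have h := Module.End.mem_eigenspace_iff.mp hv.1
      rwa [Matrix.mulVecLin_apply] at h
    have hq := quad_lower c s hs0 hs2.ge v
    rw [hveq] at hq
    have hdp : v ⬝ᵥ (μ • v) = μ * (v 0^2 + v 1^2 + v 2^2 + v 3^2 + v 4^2 + v 5^2) := by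
      simp [dotProduct, Fin.sum_univ_six]
      ring
    rw [hdp] at hq
    obtain ⟨i, hi⟩ := Function.ne_iff.mp hv.2
    have hi' : v i ≠ 0 := by simpa using hi
    have hS : 0 < ∑ j : Fin 6, v j ^ 2 :=
      Finset.sum_pos' (fun j _ => sq_nonneg _) ⟨i, Finset.mem_univ i, by positivity⟩
    rw [Fin.sum_univ_six] at hS
    exact le_of_mul_le_mul_right hq hS
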